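/- For every word I with letters in {1,2,3} and every c ∈ {1,2,3}, there exist smooth functions σ^a_J : K → ℝ, indexed by a ∈ {1,2,3} and the words J with letters in {1,2,3} and |J| < |I|, such that: (i) for every smooth function u defined on the future light cone K and every (t,x) ∈ K, L^I(∂̄_c u)(t,x) − ∂̄_c(L^I u)(t,x) = Σ_{a, |J| < |I|} σ^a_J(t,x) ∂̄_a(L^J u)(t,x); and (ii) for all words I₁ (letters in {0,1,2,3}) and J₁ (letters in {1,2,3}) there is a constant C, depending on I, J, I₁, J₁, with |∂^{I₁} L^{J₁} σ^a_J(t,x)| ≤ C t^{−|I₁|} for all (t,x) ∈ K. -/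

import Mathlib

noncomputable section

/-- Spatial part: Euclidean 3-space. -/
abbrev E3 : Type := EuclideanSpace ℝ (Fin 3)

/-- Spacetime points `(t, x) ∈ ℝ × ℝ³`. -/
abbrev Spt : Type := ℝ × E3

/-- Time derivative `∂_t`. -/
def dt (u : Spt → ℝ) : Spt → ℝ := fun p => fderiv ℝ u p (1, 0)

/-- Spatial derivative `∂_a`, `a = 1,2,3`. -/
def dx (a : Fin 3) (u : Spt → ℝ) : Spt → ℝ :=
  fun p => fderiv ℝ u p (0, EuclideanSpace.single a 1)

/-- `∂_α` for `α ∈ {0,1,2,3}`, with `∂_0 = ∂_t`. -/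
def pd : Fin 4 → (Spt → ℝ) → Spt → ℝ := ![dt, dx 0, dx 1, dx 2]

/-- Iterated derivatives `∂^I` for a word `I` in `{0,1,2,3}`. -/
def pdW : List (Fin 4) → (Spt → ℝ) → Spt → ℝ
  | [], u => u
  | α :: I, u => pd α (pdW I u)

/-- Lorentz boost `L_a = x^a ∂_t + t ∂_a`. -/
def lb (a : Fin 3) (u : Spt → ℝ) : Spt → ℝ :=
  fun p => p.2 a * dt u p + p.1 * dx a u p

/-- Iterated Lorentz boosts `L^J` for a word `J` in `{1,2,3}`. -/
def lbW : List (Fin 3) → (Spt → ℝ) → Spt → ℝ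
  | [], u => u
  | a :: J, u => lb a (lbW J u)

/-- Semi-hyperboloidal derivative `∂̄_a = (x^a/t) ∂_t + ∂_a`. -/
def shd (a : Fin 3) (u : Spt → ℝ) : Spt → ℝ :=
  fun p => (p.2 a / p.1) * dt u p + dx a u p

/-- The `Finset` of all words over the alphabet `k` of length at most `n`. -/
def wordsLe (k : Type) [DecidableEq k] [Fintype k] : ℕ → Finset (List k)
  | 0 => {[]}
  | n + 1 => wordsLe k n ∪ (Finset.univ ×ˢ wordsLe k n).image fun q => q.1 :: q.2

/-- The future light cone `K = {(t,x) : |x| < t − 1}`. -/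
def lightCone : Set Spt := {p : Spt | ‖p.2‖ < p.1 - 1}

namespace CommAux

open Topology Filter

lemma isOpen_K : IsOpen lightCone := by
  have : lightCone = {p : Spt | ‖p.2‖ - p.1 + 1 < 0} := by
    ext p; simp [lightCone]; constructor <;> intro h <;> linarith
  rw [this]
  exact isOpen_lt (by fun_prop) continuous_const

lemma one_lt_t {p : Spt} (hp : p ∈ lightCone) : 1 < p.1 := by
  have := norm_nonneg p.2
  simp only [lightCone, Set.mem_setOf_eq] at hp
  linarith

lemma t_pos {p : Spt} (hp : p ∈ lightCone) : 0 < p.1 := lt_trans one_pos (one_lt_t hp)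
lemma t_ne {p : Spt} (hp : p ∈ lightCone) : p.1 ≠ 0 := ne_of_gt (t_pos hp)

lemma K_nhds {p : Spt} (hp : p ∈ lightCone) : lightCone ∈ 𝓝 p :=
  isOpen_K.mem_nhds hp

/-- Smooth at every point of the light cone. -/
def Sm (f : Spt → ℝ) : Prop := ∀ p ∈ lightCone, ContDiffAt ℝ (⊤ : ℕ∞) f p

lemma Sm.contDiffOn {f : Spt → ℝ} (hf : Sm f) : ContDiffOn ℝ (⊤ : ℕ∞) f lightCone :=
  fun p hp => (hf p hp).contDiffWithinAt

lemma sm_of_contDiffOn {f : Spt → ℝ} (hf : ContDiffOn ℝ (⊤ : ℕ∞) f lightCone) : Sm f :=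
  fun p hp => (hf p hp).contDiffAt (K_nhds hp)

lemma Sm.diffAt {f : Spt → ℝ} (hf : Sm f) {p : Spt} (hp : p ∈ lightCone) :
    DifferentiableAt ℝ f p := (hf p hp).differentiableAt (by simp)

/-- generic directional derivative -/
def pdv (v : Spt) (f : Spt → ℝ) : Spt → ℝ := fun p => fderiv ℝ f p v

lemma dt_eq_pdv : dt = pdv (1, 0) := rfl
lemma dx_eq_pdv (a : Fin 3) : dx a = pdv (0, EuclideanSpace.single a 1) := rfl

def vdir : Fin 4 → Spt := ![(1,0), (0, EuclideanSpace.single 0 1), (0, EuclideanSpace.single 1 1), (0, EuclideanSpace.single 2 1)]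

lemma pd_eq_pdv (α : Fin 4) : pd α = pdv (vdir α) := by
  fin_cases α <;> rfl

lemma Sm.pdv {f : Spt → ℝ} (hf : Sm f) (v : Spt) : Sm (pdv v f) := by
  intro p hp
  have h1 : ContDiffAt ℝ (⊤ : ℕ∞) (fderiv ℝ f) p := (hf p hp).fderiv_right (by exact_mod_cast le_top)
  exact h1.clm_apply contDiffAt_const

lemma Sm.dt {f : Spt → ℝ} (hf : Sm f) : Sm (dt f) := by rw [dt_eq_pdv]; exact hf.pdv _
lemma Sm.dx {f : Spt → ℝ} (hf : Sm f) (a : Fin 3) : Sm (dx a f) := by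
  rw [dx_eq_pdv]; exact hf.pdv _
lemma Sm.pd {f : Spt → ℝ} (hf : Sm f) (α : Fin 4) : Sm (pd α f) := by
  rw [pd_eq_pdv]; exact hf.pdv _

end CommAux

namespace CommAux
open Topology Filter

-- congruence
lemma pdv_congr {f g : Spt → ℝ} (h : Set.EqOn f g lightCone) (v : Spt) :
    Set.EqOn (pdv v f) (pdv v g) lightCone := by
  intro p hp
  have : f =ᶠ[𝓝 p] g := eventually_of_mem (K_nhds hp) h
  simp [pdv, this.fderiv_eq]

lemma pd_congr {f g : Spt → ℝ} (h : Set.EqOn f g lightCone) (α : Fin 4) :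
    Set.EqOn (pd α f) (pd α g) lightCone := by
  rw [pd_eq_pdv]; exact pdv_congr h _

lemma dt_congr {f g : Spt → ℝ} (h : Set.EqOn f g lightCone) :
    Set.EqOn (dt f) (dt g) lightCone := by rw [dt_eq_pdv]; exact pdv_congr h _

lemma dx_congr {f g : Spt → ℝ} (h : Set.EqOn f g lightCone) (a : Fin 3) :
    Set.EqOn (dx a f) (dx a g) lightCone := by rw [dx_eq_pdv]; exact pdv_congr h _

lemma lb_congr {f g : Spt → ℝ} (h : Set.EqOn f g lightCone) (a : Fin 3) :
    Set.EqOn (lb a f) (lb a g) lightCone := by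
  intro p hp; simp only [lb, dt_congr h hp, dx_congr h a hp]

lemma pdW_congr {f g : Spt → ℝ} (h : Set.EqOn f g lightCone) (I : List (Fin 4)) :
    Set.EqOn (pdW I f) (pdW I g) lightCone := by
  induction I with
  | nil => exact h
  | cons α I ih => exact pd_congr ih α

lemma lbW_congr {f g : Spt → ℝ} (h : Set.EqOn f g lightCone) (J : List (Fin 3)) :
    Set.EqOn (lbW J f) (lbW J g) lightCone := by
  induction J with
  | nil => exact h
  | cons a J ih => exact lb_congr ih a

-- arithmetic
lemma pdv_add {f g : Spt → ℝ} {p : Spt} (hf : DifferentiableAt ℝ f p)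
    (hg : DifferentiableAt ℝ g p) (v : Spt) :
    pdv v (fun q => f q + g q) p = pdv v f p + pdv v g p := by
  simp [pdv, fderiv_fun_add hf hg]

lemma pdv_neg {f : Spt → ℝ} {p : Spt} (v : Spt) :
    pdv v (fun q => -f q) p = -pdv v f p := by
  simp [pdv, fderiv_neg]

lemma pdv_sub {f g : Spt → ℝ} {p : Spt} (hf : DifferentiableAt ℝ f p)
    (hg : DifferentiableAt ℝ g p) (v : Spt) :
    pdv v (fun q => f q - g q) p = pdv v f p - pdv v g p := by
  simp [pdv, fderiv_fun_sub hf hg]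

lemma pdv_mul {f g : Spt → ℝ} {p : Spt} (hf : DifferentiableAt ℝ f p)
    (hg : DifferentiableAt ℝ g p) (v : Spt) :
    pdv v (fun q => f q * g q) p = pdv v f p * g p + f p * pdv v g p := by
  simp [pdv, fderiv_fun_mul hf hg]; ring

lemma pdv_const {p : Spt} (v : Spt) (c : ℝ) : pdv v (fun _ => c) p = 0 := by
  simp [pdv]

-- coordinate functions
def tf : Spt → ℝ := fun p => p.1
def xf (a : Fin 3) : Spt → ℝ := fun p => p.2 a
def invt : Spt → ℝ := fun p => (p.1)⁻¹
def gc (a : Fin 3) : Spt → ℝ := fun p => p.2 a * (p.1)⁻¹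

lemma hasFDerivAt_tf (p : Spt) : HasFDerivAt tf (ContinuousLinearMap.fst ℝ ℝ E3) p :=
  hasFDerivAt_fst

lemma hasFDerivAt_xf (a : Fin 3) (p : Spt) :
    HasFDerivAt (xf a)
      ((EuclideanSpace.proj a).comp (ContinuousLinearMap.snd ℝ ℝ E3)) p :=
  ((EuclideanSpace.proj a).comp (ContinuousLinearMap.snd ℝ ℝ E3)).hasFDerivAt

lemma pdv_tf (p : Spt) (v : Spt) : pdv v tf p = v.1 := by
  simp [pdv, (hasFDerivAt_tf p).fderiv]

lemma pdv_xf (a : Fin 3) (p : Spt) (v : Spt) : pdv v (xf a) p = v.2 a := by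
  simp [pdv, (hasFDerivAt_xf a p).fderiv]

lemma hasFDerivAt_invt {p : Spt} (hp : p.1 ≠ 0) :
    HasFDerivAt invt ((-(p.1 ^ 2)⁻¹) • (ContinuousLinearMap.fst ℝ ℝ E3)) p := by
  have h1 : HasDerivAt (fun x : ℝ => x⁻¹) (-(p.1 ^ 2)⁻¹) p.1 := hasDerivAt_inv hp
  have := h1.comp_hasFDerivAt p (hasFDerivAt_tf p)
  exact this

lemma pdv_invt {p : Spt} (hp : p.1 ≠ 0) (v : Spt) :
    pdv v invt p = -(p.1 ^ 2)⁻¹ * v.1 := by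
  simp [pdv, (hasFDerivAt_invt hp).fderiv]

lemma sm_tf : Sm tf := fun p _ => contDiffAt_fst
lemma sm_xf (a : Fin 3) : Sm (xf a) := fun p _ =>
  ((EuclideanSpace.proj a).comp (ContinuousLinearMap.snd ℝ ℝ E3)).contDiff.contDiffAt
lemma sm_invt : Sm invt := fun p hp => contDiffAt_fst.inv (t_ne hp)
lemma sm_const (c : ℝ) : Sm (fun _ => c) := fun p _ => contDiffAt_const
lemma Sm.add {f g : Spt → ℝ} (hf : Sm f) (hg : Sm g) : Sm (fun q => f q + g q) :=
  fun p hp => (hf p hp).add (hg p hp)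
lemma Sm.mul {f g : Spt → ℝ} (hf : Sm f) (hg : Sm g) : Sm (fun q => f q * g q) :=
  fun p hp => (hf p hp).mul (hg p hp)
lemma Sm.neg {f : Spt → ℝ} (hf : Sm f) : Sm (fun q => -f q) :=
  fun p hp => (hf p hp).neg
lemma Sm.sub {f g : Spt → ℝ} (hf : Sm f) (hg : Sm g) : Sm (fun q => f q - g q) :=
  fun p hp => (hf p hp).sub (hg p hp)
lemma sm_gc (a : Fin 3) : Sm (gc a) := (sm_xf a).mul sm_invt
lemma Sm.lb {f : Spt → ℝ} (hf : Sm f) (a : Fin 3) : Sm (_root_.lb a f) := by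
  have : _root_.lb a f = fun p => xf a p * _root_.dt f p + tf p * _root_.dx a f p := rfl
  rw [this]
  exact ((sm_xf a).mul hf.dt).add (sm_tf.mul (hf.dx a))
lemma Sm.shd {f : Spt → ℝ} (hf : Sm f) (a : Fin 3) : Sm (_root_.shd a f) := by
  intro p hp
  have h : ContDiffAt ℝ (⊤ : ℕ∞) (fun q : Spt => (q.2 a / q.1) * _root_.dt f q + _root_.dx a f q) p :=
    (((((sm_xf a) p hp).div (sm_tf p hp) (t_ne hp))).mul (hf.dt p hp)).add (hf.dx a p hp)
  exact h
lemma Sm.pdW {f : Spt → ℝ} (hf : Sm f) (I : List (Fin 4)) : Sm (pdW I f) := by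
  induction I with
  | nil => exact hf
  | cons α I ih => exact ih.pd α
lemma Sm.lbW {f : Spt → ℝ} (hf : Sm f) (J : List (Fin 3)) : Sm (lbW J f) := by
  induction J with
  | nil => exact hf
  | cons a J ih => exact ih.lb a

-- Clairaut
lemma pdv_pdv_comm {u : Spt → ℝ} (hu : Sm u) {p : Spt} (hp : p ∈ lightCone) (v w : Spt) :
    pdv v (pdv w u) p = pdv w (pdv v u) p := by
  have hev : ∀ᶠ y in 𝓝 p, HasFDerivAt u (fderiv ℝ u y) y := by
    filter_upwards [K_nhds hp] with y hy
    exact (hu.diffAt hy).hasFDerivAt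
  have hdf : DifferentiableAt ℝ (fderiv ℝ u) p :=
    (((hu p hp).fderiv_right (by exact_mod_cast le_top) :
      ContDiffAt ℝ (⊤ : ℕ∞) (fderiv ℝ u) p)).differentiableAt (by simp)
  have hsymm := second_derivative_symmetric_of_eventually hev hdf.hasFDerivAt v w
  have key : ∀ z : Spt, pdv z (pdv w u) p = (fderiv ℝ (fderiv ℝ u) p z) w := by
    intro z
    have h2 : HasFDerivAt (fun q => fderiv ℝ u q w)
        ((ContinuousLinearMap.apply ℝ ℝ w).comp (fderiv ℝ (fderiv ℝ u) p)) p :=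
      (ContinuousLinearMap.apply ℝ ℝ w).hasFDerivAt.comp p hdf.hasFDerivAt
    have e : pdv z (pdv w u) p = fderiv ℝ (fun q => fderiv ℝ u q w) p z := rfl
    rw [e, h2.fderiv]; rfl
  rw [key v]
  have key2 : pdv w (pdv v u) p = (fderiv ℝ (fderiv ℝ u) p w) v := by
    have h2 : HasFDerivAt (fun q => fderiv ℝ u q v)
        ((ContinuousLinearMap.apply ℝ ℝ v).comp (fderiv ℝ (fderiv ℝ u) p)) p :=
      (ContinuousLinearMap.apply ℝ ℝ v).hasFDerivAt.comp p hdf.hasFDerivAt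
    have e : pdv w (pdv v u) p = fderiv ℝ (fun q => fderiv ℝ u q v) p w := rfl
    rw [e, h2.fderiv]; rfl
  rw [key2]
  exact hsymm

end CommAux

namespace CommAux
open Topology Filter

def v0 : Spt := (1, 0)
def vs (a : Fin 3) : Spt := (0, EuclideanSpace.single a 1)

lemma dt_eq' : dt = pdv v0 := rfl
lemma dx_eq' (a : Fin 3) : dx a = pdv (vs a) := rfl

lemma v0_fst : v0.1 = 1 := rfl
lemma v0_snd (a : Fin 3) : v0.2 a = 0 := rfl
lemma vs_fst (a : Fin 3) : (vs a).1 = 0 := rfl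
lemma vs_snd (a b : Fin 3) : (vs a).2 b = if b = a then 1 else 0 := by
  simp [vs, EuclideanSpace.single_apply]

lemma pdv_gc (a : Fin 3) {p : Spt} (hp : p ∈ lightCone) (v : Spt) :
    pdv v (gc a) p = v.2 a * (p.1)⁻¹ + p.2 a * (-(p.1 ^ 2)⁻¹ * v.1) := by
  have h : gc a = fun q => xf a q * invt q := rfl
  rw [h, pdv_mul ((sm_xf a).diffAt hp) (sm_invt.diffAt hp), pdv_xf, pdv_invt (t_ne hp)]
  rfl

lemma shd_eq (a : Fin 3) (w : Spt → ℝ) :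
    shd a w = fun q => gc a q * pdv v0 w q + pdv (vs a) w q := by
  funext q; simp [shd, gc, div_eq_mul_inv, dt_eq', dx_eq']

lemma lb_eq (a : Fin 3) (w : Spt → ℝ) :
    lb a w = fun q => xf a q * pdv v0 w q + tf q * pdv (vs a) w q := rfl

/-- The one-step commutator identity: `[L_b, ∂̄_c] u = -(x^c/t) ∂̄_b u` on `K`. -/
lemma lb_shd_comm {u : Spt → ℝ} (hu : Sm u) {p : Spt} (hp : p ∈ lightCone) (b c : Fin 3) :
    lb b (shd c u) p = shd c (lb b u) p - gc c p * shd b u p := by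
  have hT : p.1 ≠ 0 := t_ne hp
  -- differentiability facts
  have hdu0 : DifferentiableAt ℝ (pdv v0 u) p := ((hu.pdv v0).diffAt hp)
  have hdub : DifferentiableAt ℝ (pdv (vs b) u) p := ((hu.pdv (vs b)).diffAt hp)
  have hduc : DifferentiableAt ℝ (pdv (vs c) u) p := ((hu.pdv (vs c)).diffAt hp)
  have hgc : ∀ a : Fin 3, DifferentiableAt ℝ (gc a) p := fun a => (sm_gc a).diffAt hp
  have hxf : ∀ a : Fin 3, DifferentiableAt ℝ (xf a) p := fun a => (sm_xf a).diffAt hp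
  have htf : DifferentiableAt ℝ tf p := sm_tf.diffAt hp
  -- compute pdv v (shd c u) p for v ∈ {v0, vs b}
  have hshd : ∀ v : Spt, pdv v (shd c u) p =
      (pdv v (gc c) p) * pdv v0 u p + gc c p * pdv v (pdv v0 u) p + pdv v (pdv (vs c) u) p := by
    intro v
    rw [shd_eq]
    rw [pdv_add (f := fun q => gc c q * pdv v0 u q) (((hgc c).mul hdu0)) hduc v,
      pdv_mul (hgc c) hdu0 v]
  -- compute pdv v (lb b u) p
  have hlb : ∀ v : Spt, pdv v (lb b u) p =
      v.2 b * pdv v0 u p + xf b p * pdv v (pdv v0 u) p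
        + v.1 * pdv (vs b) u p + tf p * pdv v (pdv (vs b) u) p := by
    intro v
    rw [lb_eq]
    rw [pdv_add (f := fun q => xf b q * pdv v0 u q) (g := fun q => tf q * pdv (vs b) u q) ((hxf b).mul hdu0) (htf.mul hdub) v,
      pdv_mul (hxf b) hdu0 v, pdv_mul htf hdub v, pdv_xf, pdv_tf]
    ring
  -- expand both sides
  have elhs : lb b (shd c u) p = xf b p * pdv v0 (shd c u) p + tf p * pdv (vs b) (shd c u) p := by
    rw [lb_eq]
  have erhs : shd c (lb b u) p = gc c p * pdv v0 (lb b u) p + pdv (vs c) (lb b u) p := by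
    rw [shd_eq]
  rw [elhs, erhs, hshd v0, hshd (vs b), hlb v0, hlb (vs c)]
  have eshdb : shd b u p = gc b p * pdv v0 u p + pdv (vs b) u p := by rw [shd_eq]
  rw [eshdb]
  -- commutation of second derivatives
  rw [show pdv (vs b) (pdv v0 u) p = pdv v0 (pdv (vs b) u) p from pdv_pdv_comm hu hp _ _,
    show pdv (vs c) (pdv v0 u) p = pdv v0 (pdv (vs c) u) p from pdv_pdv_comm hu hp _ _,
    show pdv (vs b) (pdv (vs c) u) p = pdv (vs c) (pdv (vs b) u) p from pdv_pdv_comm hu hp _ _]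
  rw [pdv_gc c hp, pdv_gc c hp]
  simp only [v0_fst, v0_snd, vs_fst, vs_snd, gc, xf, tf]
  by_cases hcb : c = b
  · subst hcb
    simp only [if_pos rfl]
    field_simp
    ring
  · rw [if_neg hcb, if_neg (fun h => hcb h.symm)]
    field_simp
    ring

end CommAux

namespace CommAux
open Topology Filter

lemma lb_add {f g : Spt → ℝ} {p : Spt} (hf : DifferentiableAt ℝ f p)
    (hg : DifferentiableAt ℝ g p) (b : Fin 3) :
    lb b (fun q => f q + g q) p = lb b f p + lb b g p := by
  simp only [lb, dt_eq', dx_eq', pdv_add hf hg]; ring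

lemma lb_sub {f g : Spt → ℝ} {p : Spt} (hf : DifferentiableAt ℝ f p)
    (hg : DifferentiableAt ℝ g p) (b : Fin 3) :
    lb b (fun q => f q - g q) p = lb b f p - lb b g p := by
  simp only [lb, dt_eq', dx_eq', pdv_sub hf hg]; ring

lemma lb_mul {f g : Spt → ℝ} {p : Spt} (hf : DifferentiableAt ℝ f p)
    (hg : DifferentiableAt ℝ g p) (b : Fin 3) :
    lb b (fun q => f q * g q) p = lb b f p * g p + f p * lb b g p := by
  simp only [lb, dt_eq', dx_eq', pdv_mul hf hg]; ring

lemma lb_const (c : ℝ) (b : Fin 3) (p : Spt) : lb b (fun _ => c) p = 0 := by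
  simp [lb, dt_eq', dx_eq', pdv_const]

-- list sums
lemma diff_listSum {ι : Type} (S : List ι) (F : ι → Spt → ℝ) {p : Spt}
    (h : ∀ e ∈ S, DifferentiableAt ℝ (F e) p) :
    DifferentiableAt ℝ (fun x => (S.map (fun e => F e x)).sum) p := by
  induction S with
  | nil => simpa using differentiableAt_const (0:ℝ)
  | cons e S ih =>
    simp only [List.map_cons, List.sum_cons]
    exact (h e (by simp)).add (ih (fun e' he' => h e' (by simp [he'])))

lemma pdv_listSum {ι : Type} (S : List ι) (F : ι → Spt → ℝ) {p : Spt}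
    (h : ∀ e ∈ S, DifferentiableAt ℝ (F e) p) (v : Spt) :
    pdv v (fun x => (S.map (fun e => F e x)).sum) p
      = (S.map (fun e => pdv v (F e) p)).sum := by
  induction S with
  | nil => simpa using pdv_const v 0
  | cons e S ih =>
    simp only [List.map_cons, List.sum_cons]
    rw [← ih (fun e' he' => h e' (by simp [he']))]
    exact pdv_add (h e (by simp)) (diff_listSum S F (fun e' he' => h e' (by simp [he']))) v

lemma listSum_comb {ι : Type} (S : List ι) (A B : ℝ) (f g : ι → ℝ) :
    A * (S.map f).sum + B * (S.map g).sum = (S.map (fun e => A * f e + B * g e)).sum := by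
  induction S with
  | nil => simp
  | cons e S ih =>
    simp only [List.map_cons, List.sum_cons, ← ih]
    ring

lemma lb_listSum {ι : Type} (S : List ι) (F : ι → Spt → ℝ) {p : Spt}
    (h : ∀ e ∈ S, DifferentiableAt ℝ (F e) p) (b : Fin 3) :
    lb b (fun x => (S.map (fun e => F e x)).sum) p
      = (S.map (fun e => lb b (F e) p)).sum := by
  simp only [lb, dt_eq', dx_eq', pdv_listSum S F h]
  rw [listSum_comb]

/-- Graded class of coefficient functions: polynomials in `x^a/t` times `t^{-k}`. -/
inductive Pk : ℕ → (Spt → ℝ) → Prop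
  | const (c : ℝ) : Pk 0 (fun _ => c)
  | g (a : Fin 3) : Pk 0 (gc a)
  | inv : Pk 1 invt
  | add {k : ℕ} {f g : Spt → ℝ} : Pk k f → Pk k g → Pk k (fun q => f q + g q)
  | mul {k l : ℕ} {f g : Spt → ℝ} : Pk k f → Pk l g → Pk (k + l) (fun q => f q * g q)

lemma Pk.sm {k : ℕ} {f : Spt → ℝ} (hf : Pk k f) : Sm f := by
  induction hf with
  | const c => exact sm_const c
  | g a => exact sm_gc a
  | inv => exact sm_invt
  | add _ _ ih ih' => exact ih.add ih'
  | mul _ _ ih ih' => exact ih.mul ih'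

lemma abs_coord_le {p : Spt} (hp : p ∈ lightCone) (a : Fin 3) : |p.2 a| ≤ p.1 := by
  have h1 : |p.2 a| ≤ ‖p.2‖ := by
    have := EuclideanSpace.norm_eq p.2
    calc |p.2 a| = Real.sqrt (|p.2 a| ^ 2) := by rw [Real.sqrt_sq (abs_nonneg _)]
    _ ≤ ‖p.2‖ := by
        rw [this]
        apply Real.sqrt_le_sqrt
        rw [sq_abs]
        simp only [Real.norm_eq_abs, sq_abs]
        exact Finset.single_le_sum (f := fun i => p.2 i ^ 2)
          (fun i _ => sq_nonneg _) (Finset.mem_univ a)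
  have h2 := one_lt_t hp
  simp only [lightCone, Set.mem_setOf_eq] at hp
  linarith

lemma Pk.bound {k : ℕ} {f : Spt → ℝ} (hf : Pk k f) :
    ∃ C : ℝ, ∀ p ∈ lightCone, |f p| ≤ C * p.1 ^ (-(k : ℝ)) := by
  induction hf with
  | const c =>
    exact ⟨|c|, fun p hp => by simp⟩
  | g a =>
    refine ⟨1, fun p hp => ?_⟩
    have hT := t_pos hp
    simp only [gc, Nat.cast_zero, neg_zero, Real.rpow_zero, mul_one, abs_mul, abs_inv,
      abs_of_pos hT]
    have h1 : |p.2 a| * p.1⁻¹ ≤ p.1 * p.1⁻¹ :=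
      mul_le_mul_of_nonneg_right (abs_coord_le hp a) (by positivity)
    rw [mul_inv_cancel₀ (t_ne hp)] at h1
    exact h1
  | inv =>
    refine ⟨1, fun p hp => ?_⟩
    have hT := t_pos hp
    rw [show ((1:ℕ):ℝ) = 1 by norm_num, Real.rpow_neg_one]
    simp [invt, abs_of_pos (inv_pos.mpr hT)]
  | @add k1 f1 g1 _ _ ih ih' =>
    obtain ⟨C1, h1⟩ := ih
    obtain ⟨C2, h2⟩ := ih'
    refine ⟨C1 + C2, fun p hp => ?_⟩
    calc |f1 p + g1 p| ≤ |f1 p| + |g1 p| := abs_add_le _ _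
    _ ≤ C1 * p.1 ^ (-(k1 : ℕ):ℝ) + C2 * p.1 ^ (-(k1:ℕ):ℝ) := add_le_add (h1 p hp) (h2 p hp)
    _ = (C1 + C2) * p.1 ^ (-(k1:ℕ):ℝ) := by ring
  | @mul k1 l1 f1 g1 _ _ ih ih' =>
    obtain ⟨C1, h1⟩ := ih
    obtain ⟨C2, h2⟩ := ih'
    refine ⟨C1 * C2, fun p hp => ?_⟩
    have hT := t_pos hp
    have e : p.1 ^ (-((k1 + l1 : ℕ) : ℝ)) = p.1 ^ (-(k1:ℕ):ℝ) * p.1 ^ (-(l1:ℕ):ℝ) := by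
      rw [← Real.rpow_add hT]; push_cast; ring_nf
    rw [abs_mul, e]
    calc |f1 p| * |g1 p| ≤ (C1 * p.1 ^ (-(k1:ℕ):ℝ)) * (C2 * p.1 ^ (-(l1:ℕ):ℝ)) :=
      mul_le_mul (h1 p hp) (h2 p hp) (abs_nonneg _) (le_trans (abs_nonneg _) (h1 p hp))
    _ = _ := by ring

end CommAux

namespace CommAux
open Topology Filter Set

lemma Pk.cast {k l : ℕ} {f : Spt → ℝ} (h : k = l) (hf : Pk k f) : Pk l f := h ▸ hf

lemma Pk.pdv_exists {k : ℕ} {f : Spt → ℝ} (hf : Pk k f) (v : Spt) :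
    ∃ f', Pk (k + 1) f' ∧ ∀ p ∈ lightCone, pdv v f p = f' p := by
  induction hf with
  | const c =>
    refine ⟨fun q => 0 * invt q, Pk.mul (Pk.const 0) Pk.inv, fun p hp => ?_⟩
    rw [pdv_const]; ring
  | g a =>
    refine ⟨fun q => v.2 a * invt q + gc a q * invt q * (-v.1),
      Pk.add (Pk.mul (Pk.const (v.2 a)) Pk.inv)
        (Pk.cast (by ring) (Pk.mul (Pk.mul (Pk.g a) Pk.inv) (Pk.const (-v.1)))),
      fun p hp => ?_⟩
    rw [pdv_gc a hp]
    have hT := t_ne hp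
    simp only [gc, invt]
    field_simp
  | inv =>
    refine ⟨fun q => invt q * invt q * (-v.1),
      Pk.cast (by ring) (Pk.mul (Pk.mul Pk.inv Pk.inv) (Pk.const (-v.1))),
      fun p hp => ?_⟩
    rw [pdv_invt (t_ne hp)]
    simp only [invt]
    rw [sq, mul_inv]
    ring
  | @add k1 f1 g1 hf1 hg1 ih ih' =>
    obtain ⟨f', hf', e1⟩ := ih
    obtain ⟨g', hg', e2⟩ := ih'
    refine ⟨fun q => f' q + g' q, Pk.add hf' hg', fun p hp => ?_⟩
    rw [pdv_add (hf1.sm.diffAt hp) (hg1.sm.diffAt hp), e1 p hp, e2 p hp]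
  | @mul k1 l1 f1 g1 hf1 hg1 ih ih' =>
    obtain ⟨f', hf', e1⟩ := ih
    obtain ⟨g', hg', e2⟩ := ih'
    refine ⟨fun q => f' q * g1 q + f1 q * g' q,
      Pk.add (Pk.cast (by ring) (Pk.mul hf' hg1)) (Pk.cast (by ring) (Pk.mul hf1 hg')),
      fun p hp => ?_⟩
    rw [pdv_mul (hf1.sm.diffAt hp) (hg1.sm.diffAt hp), e1 p hp, e2 p hp]

lemma Pk.lb_exists {k : ℕ} {f : Spt → ℝ} (hf : Pk k f) (b : Fin 3) :
    ∃ f', Pk k f' ∧ ∀ p ∈ lightCone, lb b f p = f' p := by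
  induction hf with
  | const c =>
    exact ⟨fun _ => (0:ℝ), Pk.const 0, fun p hp => lb_const c b p⟩
  | g a =>
    refine ⟨fun q => (fun _ => (if a = b then (1:ℝ) else 0)) q + gc a q * gc b q * (-1),
      Pk.add (Pk.const _) (Pk.cast (by ring) (Pk.mul (Pk.mul (Pk.g a) (Pk.g b)) (Pk.const (-1)))),
      fun p hp => ?_⟩
    have hT := t_ne hp
    simp only [lb, dt_eq', dx_eq', pdv_gc a hp, v0_fst, v0_snd, vs_fst, vs_snd, gc]
    by_cases hab : a = b
    · subst hab
      simp only [if_pos rfl]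
      field_simp
      ring
    · simp only [if_neg hab]
      field_simp
      ring
  | inv =>
    refine ⟨fun q => gc b q * invt q * (-1),
      Pk.cast (by ring) (Pk.mul (Pk.mul (Pk.g b) Pk.inv) (Pk.const (-1))),
      fun p hp => ?_⟩
    have hT := t_ne hp
    simp only [lb, dt_eq', dx_eq', pdv_invt hT, v0_fst, v0_snd, vs_fst, vs_snd, gc, invt]
    rw [sq, mul_inv]
    ring
  | @add k1 f1 g1 hf1 hg1 ih ih' =>
    obtain ⟨f', hf', e1⟩ := ih
    obtain ⟨g', hg', e2⟩ := ih'
    refine ⟨fun q => f' q + g' q, Pk.add hf' hg', fun p hp => ?_⟩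
    rw [lb_add (hf1.sm.diffAt hp) (hg1.sm.diffAt hp), e1 p hp, e2 p hp]
  | @mul k1 l1 f1 g1 hf1 hg1 ih ih' =>
    obtain ⟨f', hf', e1⟩ := ih
    obtain ⟨g', hg', e2⟩ := ih'
    refine ⟨fun q => f' q * g1 q + f1 q * g' q, Pk.add (Pk.mul hf' hg1) (Pk.mul hf1 hg'),
      fun p hp => ?_⟩
    rw [lb_mul (hf1.sm.diffAt hp) (hg1.sm.diffAt hp), e1 p hp, e2 p hp]

/-- Admissible coefficient functions: smooth on `K` and agreeing on `K` with an
element of `Pk 0`. -/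
def Adm (f : Spt → ℝ) : Prop := Sm f ∧ ∃ h, Pk 0 h ∧ Set.EqOn f h lightCone

lemma Adm.sm {f : Spt → ℝ} (hf : Adm f) : Sm f := hf.1

lemma Adm.of_eq {f g : Spt → ℝ} (hf : Adm f) (h : ∀ p, g p = f p) : Adm g := by
  have : g = f := funext h
  rw [this]; exact hf

lemma adm_gc (a : Fin 3) : Adm (gc a) := ⟨sm_gc a, gc a, Pk.g a, fun p _ => rfl⟩
lemma adm_zero : Adm (fun _ => (0:ℝ)) := ⟨sm_const 0, _, Pk.const 0, fun p _ => rfl⟩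
lemma adm_neg_gc (a : Fin 3) : Adm (fun q => -gc a q) :=
  ⟨(sm_gc a).neg, fun q => gc a q * (-1),
    Pk.cast (by ring) (Pk.mul (Pk.g a) (Pk.const (-1))), fun p _ => by simp⟩

lemma Adm.add {f g : Spt → ℝ} (hf : Adm f) (hg : Adm g) : Adm (fun q => f q + g q) := by
  obtain ⟨hsf, f', hf', e1⟩ := hf
  obtain ⟨hsg, g', hg', e2⟩ := hg
  exact ⟨hsf.add hsg, fun q => f' q + g' q, Pk.add hf' hg',
    fun p hp => by simp only [e1 hp, e2 hp]⟩

lemma Adm.mul {f g : Spt → ℝ} (hf : Adm f) (hg : Adm g) : Adm (fun q => f q * g q) := by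
  obtain ⟨hsf, f', hf', e1⟩ := hf
  obtain ⟨hsg, g', hg', e2⟩ := hg
  exact ⟨hsf.mul hsg, fun q => f' q * g' q, Pk.mul hf' hg',
    fun p hp => by simp only [e1 hp, e2 hp]⟩

lemma Adm.neg {f : Spt → ℝ} (hf : Adm f) : Adm (fun q => -f q) := by
  obtain ⟨hsf, f', hf', e1⟩ := hf
  exact ⟨hsf.neg, fun q => f' q * (-1), Pk.cast (by ring) (Pk.mul hf' (Pk.const (-1))),
    fun p hp => by simp only [e1 hp]; ring⟩

lemma Adm.lb {f : Spt → ℝ} (hf : Adm f) (b : Fin 3) : Adm (_root_.lb b f) := by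
  obtain ⟨hsf, f', hf', e1⟩ := hf
  obtain ⟨h', hh', e2⟩ := hf'.lb_exists b
  exact ⟨hsf.lb b, h', hh', fun p hp => (lb_congr e1 b hp).trans (e2 p hp)⟩

lemma Adm.bound {f : Spt → ℝ} (hf : Adm f) (I₁ : List (Fin 4)) (J₁ : List (Fin 3)) :
    ∃ C : ℝ, ∀ p ∈ lightCone, |pdW I₁ (lbW J₁ f) p| ≤ C * p.1 ^ (-(I₁.length : ℝ)) := by
  obtain ⟨hsf, f', hf', e1⟩ := hf
  -- first: lbW J₁ f agrees with a Pk 0 function on K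
  have step1 : ∃ h, Pk 0 h ∧ Set.EqOn (lbW J₁ f) h lightCone := by
    induction J₁ with
    | nil => exact ⟨f', hf', e1⟩
    | cons b J ih =>
      obtain ⟨h, hh, e⟩ := ih
      obtain ⟨h', hh', e'⟩ := hh.lb_exists b
      exact ⟨h', hh', fun p hp => (lb_congr e b hp).trans (e' p hp)⟩
  obtain ⟨h, hh, e⟩ := step1
  have hsml : Sm (lbW J₁ f) := hsf.lbW J₁
  -- then: pdW I₁ of it agrees with a Pk I₁.length function
  have step2 : ∃ h', Pk I₁.length h' ∧ Set.EqOn (pdW I₁ (lbW J₁ f)) h' lightCone := by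
    induction I₁ with
    | nil => exact ⟨h, hh, e⟩
    | cons α I ih =>
      obtain ⟨h', hh', e'⟩ := ih
      obtain ⟨h'', hh'', e''⟩ := hh'.pdv_exists (vdir α)
      refine ⟨h'', hh'', fun p hp => ?_⟩
      have : pd α (pdW I (lbW J₁ f)) p = pdv (vdir α) (pdW I (lbW J₁ f)) p := by
        rw [pd_eq_pdv]
      rw [show pdW (α :: I) (lbW J₁ f) p = pd α (pdW I (lbW J₁ f)) p from rfl, this]
      have e3 : Set.EqOn (pdv (vdir α) (pdW I (lbW J₁ f))) (pdv (vdir α) h') lightCone :=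
        pdv_congr e' (vdir α)
      rw [e3 hp]
      exact e'' p hp
  obtain ⟨h', hh', e'⟩ := step2
  obtain ⟨C, hC⟩ := hh'.bound
  exact ⟨C, fun p hp => by rw [e' hp]; exact hC p hp⟩

end CommAux

namespace CommAux
open Topology Filter Set

abbrev Term : Type := (Spt → ℝ) × Fin 3 × List (Fin 3)

lemma listSum_add3 {ι : Type} (S : List ι) (F G H : ι → ℝ) :
    (S.map (fun e => F e + G e + H e)).sum = (S.map F).sum + (S.map G).sum + (S.map H).sum := by
  induction S with
  | nil => simp
  | cons e S ih => simp only [List.map_cons, List.sum_cons, ih]; ring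

lemma listSum_mul_right {ι : Type} (S : List ι) (f : ι → ℝ) (r : ℝ) :
    (S.map f).sum * r = (S.map (fun e => f e * r)).sum := by
  induction S with
  | nil => simp
  | cons e S ih => simp only [List.map_cons, List.sum_cons, ← ih]; ring

/-- Main inductive claim: the commutator is a combination of `σ ∂̄_a L^J u` with
admissible coefficients and shorter words. -/
lemma main_claim (c : Fin 3) (I : List (Fin 3)) :
    ∃ S : List Term,
      (∀ e ∈ S, Adm e.1 ∧ e.2.2.length < I.length) ∧
      ∀ u : Spt → ℝ, Sm u → ∀ p ∈ lightCone,
        lbW I (shd c u) p - shd c (lbW I u) p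
          = (S.map (fun e => e.1 p * shd e.2.1 (lbW e.2.2 u) p)).sum := by
  induction I with
  | nil =>
    refine ⟨[], by simp, fun u hu p hp => by simp [lbW]⟩
  | cons b I ih =>
    obtain ⟨S, hS, hid⟩ := ih
    refine ⟨S.map (fun e => (_root_.lb b e.1, e.2.1, e.2.2))
        ++ S.map (fun e => (e.1, e.2.1, b :: e.2.2))
        ++ S.map (fun e => ((fun q => -gc e.2.1 q * e.1 q), b, e.2.2))
        ++ [((fun q => -gc c q), b, I)], ?_, ?_⟩
    · intro e he
      simp only [List.mem_append, List.mem_map, List.mem_singleton] at he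
      rcases he with ((⟨e', he', rfl⟩ | ⟨e', he', rfl⟩) | ⟨e', he', rfl⟩) | rfl
      · exact ⟨(hS e' he').1.lb b, Nat.lt_succ_of_lt (hS e' he').2⟩
      · exact ⟨(hS e' he').1, Nat.succ_lt_succ (hS e' he').2⟩
      · exact ⟨(adm_neg_gc e'.2.1).mul (hS e' he').1, Nat.lt_succ_of_lt (hS e' he').2⟩
      · exact ⟨(adm_gc c).neg, Nat.lt_succ_self _⟩
    · intro u hu p hp
      set A := lbW I (shd c u) with hA
      set B := shd c (lbW I u) with hB
      have smA : Sm A := (hu.shd c).lbW I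
      have smB : Sm B := (hu.lbW I).shd c
      have smTerm : ∀ e ∈ S, Sm (fun q => e.1 q * shd e.2.1 (lbW e.2.2 u) q) :=
        fun e he => (hS e he).1.sm.mul ((hu.lbW e.2.2).shd e.2.1)
      -- LHS decomposition
      have hL : lbW (b :: I) (shd c u) p = lb b A p := rfl
      have hR : shd c (lbW (b :: I) u) p = shd c (_root_.lb b (lbW I u)) p := rfl
      have split : lb b A p = lb b (fun q => A q - B q) p + lb b B p := by
        have e1 : A = fun q => (A q - B q) + B q := funext fun q => by ring
        calc lb b A p = lb b (fun q => (A q - B q) + B q) p := by rw [← e1]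
        _ = lb b (fun q => A q - B q) p + lb b B p :=
          lb_add ((smA.sub smB).diffAt hp) (smB.diffAt hp) b
      have comm1 : lb b B p = shd c (_root_.lb b (lbW I u)) p - gc c p * shd b (lbW I u) p :=
        lb_shd_comm (hu.lbW I) hp b c
      -- main sum part
      have hsum : lb b (fun q => A q - B q) p
          = (S.map (fun e => lb b (fun q => e.1 q * shd e.2.1 (lbW e.2.2 u) q) p)).sum := by
        have heq : Set.EqOn (fun q => A q - B q)
            (fun q => (S.map (fun e => e.1 q * shd e.2.1 (lbW e.2.2 u) q)).sum) lightCone :=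
          fun q hq => hid u hu q hq
        rw [lb_congr heq b hp]
        exact lb_listSum S _ (fun e he => (smTerm e he).diffAt hp) b
      have hterm : ∀ e ∈ S, lb b (fun q => e.1 q * shd e.2.1 (lbW e.2.2 u) q) p
          = _root_.lb b e.1 p * shd e.2.1 (lbW e.2.2 u) p
            + e.1 p * shd e.2.1 (lbW (b :: e.2.2) u) p
            + (-gc e.2.1 p * e.1 p) * shd b (lbW e.2.2 u) p := by
        intro e he
        rw [lb_mul ((hS e he).1.sm.diffAt hp) (((hu.lbW e.2.2).shd e.2.1).diffAt hp)]
        rw [lb_shd_comm (hu.lbW e.2.2) hp b e.2.1]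
        have : shd e.2.1 (_root_.lb b (lbW e.2.2 u)) p = shd e.2.1 (lbW (b :: e.2.2) u) p := rfl
        rw [this]
        ring
      -- assemble
      rw [hL, hR, split, comm1, hsum]
      rw [List.map_congr_left hterm, listSum_add3]
      simp only [List.map_append, List.sum_append, List.map_map, List.map_cons, List.map_nil,
        List.sum_cons, List.sum_nil, Function.comp_def]
      ring

end CommAux

namespace CommAux
open Topology Filter Set

lemma mem_wordsLe {k : Type} [DecidableEq k] [Fintype k] :
    ∀ (n : ℕ) (l : List k), l.length ≤ n → l ∈ wordsLe k n := by
  intro n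
  induction n with
  | zero =>
    intro l hl
    have : l = [] := List.length_eq_zero_iff.mp (Nat.le_zero.mp hl)
    subst this
    simp [wordsLe]
  | succ n ih =>
    intro l hl
    match l with
    | [] =>
      simp only [wordsLe, Finset.mem_union]
      exact Or.inl (ih [] (Nat.zero_le n))
    | a :: l' =>
      simp only [wordsLe, Finset.mem_union]
      refine Or.inr ?_
      refine Finset.mem_image.mpr ⟨(a, l'), ?_, rfl⟩
      refine Finset.mem_product.mpr ⟨Finset.mem_univ a, ih l' ?_⟩
      simpa using Nat.succ_le_succ_iff.mp hl

lemma sum_fiber (S : List Term) (T : Finset (Fin 3 × List (Fin 3)))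
    (hT : ∀ e ∈ S, e.2 ∈ T) (F : Term → ℝ) :
    ∑ t ∈ T, ((S.filter (fun e => e.2 = t)).map F).sum = (S.map F).sum := by
  induction S with
  | nil => simp
  | cons e S ih =>
    have he : e.2 ∈ T := hT e (by simp)
    have key : ∀ t ∈ T, (((e :: S).filter (fun e' => e'.2 = t)).map F).sum
        = (if e.2 = t then F e else 0) + ((S.filter (fun e' => e'.2 = t)).map F).sum := by
      intro t _
      by_cases h : e.2 = t
      · simp [List.filter_cons, h]
      · simp [List.filter_cons, h]
    rw [Finset.sum_congr rfl key, Finset.sum_add_distrib,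
      ih (fun e' he' => hT e' (by simp [he'])), Finset.sum_ite_eq T e.2 (fun _ => F e),
      if_pos he]
    simp

lemma adm_listSum {ι : Type} (S : List ι) (F : ι → Spt → ℝ) (h : ∀ e ∈ S, Adm (F e)) :
    Adm (fun p => (S.map (fun e => F e p)).sum) := by
  induction S with
  | nil => exact adm_zero.of_eq (fun p => by simp)
  | cons e S ih =>
    have := (h e (by simp)).add (ih (fun e' he' => h e' (by simp [he'])))
    exact this.of_eq (fun p => by simp)

end CommAux


open CommAux in
/-- Commutator of iterated Lorentz boosts with a semi-hyperboloidal derivative inside the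
future light cone: `[L^I, ∂̄_c] u = Σ_{a, |J| < |I|} σ^a_J ∂̄_a L^J u`, where the smooth
coefficients `σ^a_J` satisfy `|∂^{I₁} L^{J₁} σ^a_J| ≤ C t^{−|I₁|}` in `K`. -/
theorem commutator_boostW_shd (I : List (Fin 3)) (c : Fin 3) :
    ∃ σf : Fin 3 → List (Fin 3) → Spt → ℝ,
      (∀ (a : Fin 3) (J : List (Fin 3)),
        ContDiffOn ℝ (⊤ : ℕ∞) (σf a J) lightCone) ∧
      (∀ u : Spt → ℝ, ContDiffOn ℝ (⊤ : ℕ∞) u lightCone →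
        ∀ p ∈ lightCone,
          lbW I (shd c u) p - shd c (lbW I u) p =
            ∑ a : Fin 3,
              ∑ J ∈ (wordsLe (Fin 3) I.length).filter fun l => l.length < I.length,
                σf a J p * shd a (lbW J u) p) ∧
      (∀ (a : Fin 3) (J : List (Fin 3)) (I₁ : List (Fin 4)) (J₁ : List (Fin 3)),
        ∃ C : ℝ, ∀ p ∈ lightCone,
          |pdW I₁ (lbW J₁ (σf a J)) p| ≤ C * p.1 ^ (-(I₁.length : ℝ))) := by
  obtain ⟨S, hS, hid⟩ := main_claim c I
  set W := (wordsLe (Fin 3) I.length).filter (fun l => l.length < I.length) with hW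
  refine ⟨fun a J => fun p => ((S.filter (fun e => e.2 = (a, J))).map (fun e => e.1 p)).sum,
    ?_, ?_, ?_⟩
  · intro a J
    exact (adm_listSum _ _ (fun e he => (hS e (List.mem_of_mem_filter he)).1)).sm.contDiffOn
  · intro u hu p hp
    rw [hid u (sm_of_contDiffOn hu) p hp]
    symm
    have key : ∀ (a : Fin 3) (J : List (Fin 3)),
        (((S.filter (fun e => e.2 = (a, J))).map (fun e => e.1 p)).sum) * shd a (lbW J u) p
        = ((S.filter (fun e => e.2 = (a, J))).map
            (fun e => e.1 p * shd e.2.1 (lbW e.2.2 u) p)).sum := by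
      intro a J
      rw [listSum_mul_right]
      apply congrArg List.sum
      apply List.map_congr_left
      intro e he
      have h2 : e.2 = (a, J) := by
        have := (List.mem_filter.mp he).2
        simpa using this
      have ha : e.2.1 = a := by rw [h2]
      have hJ : e.2.2 = J := by rw [h2]
      rw [ha, hJ]
    calc ∑ a : Fin 3, ∑ J ∈ W,
          (((S.filter (fun e => e.2 = (a, J))).map (fun e => e.1 p)).sum) * shd a (lbW J u) p
        = ∑ a : Fin 3, ∑ J ∈ W, ((S.filter (fun e => e.2 = (a, J))).map
            (fun e => e.1 p * shd e.2.1 (lbW e.2.2 u) p)).sum := by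
          exact Finset.sum_congr rfl fun a _ => Finset.sum_congr rfl fun J _ => key a J
      _ = ∑ t ∈ Finset.univ ×ˢ W, ((S.filter (fun e => e.2 = t)).map
            (fun e => e.1 p * shd e.2.1 (lbW e.2.2 u) p)).sum := by
          rw [Finset.sum_product]
      _ = (S.map (fun e => e.1 p * shd e.2.1 (lbW e.2.2 u) p)).sum := by
          apply sum_fiber
          intro e he
          refine Finset.mem_product.mpr ⟨Finset.mem_univ _, ?_⟩
          rw [hW]
          exact Finset.mem_filter.mpr
            ⟨mem_wordsLe _ _ (le_of_lt (hS e he).2), (hS e he).2⟩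
  · intro a J I₁ J₁
    exact (adm_listSum _ _ (fun e he => (hS e (List.mem_of_mem_filter he)).1)).bound I₁ J₁
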